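/- Let T : Multiset α be an analytic table, A : α → β an attribute, and z₁ : α → κ₁ a grouping key (grouping set Y). Let K : α → κ₀ be a key such that K together with A literally determines z₁, i.e., for all t₁, t₂ ∈ T, if K t₁ = K t₂ and A t₁ = A t₂ then z₁ t₁ = z₁ t₂. Then for every intermediate grouping key z₂ : α → κ₂ that is coarser than z₁ and at least as fine as K (i.e., z₂ = p ∘ z₁ for some p : κ₁ → κ₂ and K = q ∘ z₂ for some q : κ₂ → κ₀) and for every x : κ₂: ((T.filter (fun t => z₂ t = x)).map A).toFinset.card = ∑ y ∈ ((T.filter (fun t => z₂ t = x)).map z₁).toFinset, ((T.filter (fun t => z₁ t = y)).map A).toFinset.card. That is, summing the per-z₁-group COUNTDISTINCT of A over any grouping set containing Y − X' (where X' is the part of Y removed to form K) reproduces the direct COUNTDISTINCT of A. (Correctness of the COUNTDISTINCT propagation rule preserving summarizability.) -/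

import Mathlib

/-- Correctness of the COUNTDISTINCT propagation rule preserving summarizability. -/
theorem countdistinct_propagation_rule
    {α β κ₀ κ₁ κ₂ : Type*} [DecidableEq β] [DecidableEq κ₁] [DecidableEq κ₂]
    (T : Multiset α) (A : α → β) (z₁ : α → κ₁) (K : α → κ₀)
    (hK : ∀ t₁ ∈ T, ∀ t₂ ∈ T, K t₁ = K t₂ → A t₁ = A t₂ → z₁ t₁ = z₁ t₂)
    (z₂ : α → κ₂) (p : κ₁ → κ₂) (q : κ₂ → κ₀)
    (hcoarser : z₂ = p ∘ z₁) (hfiner : K = q ∘ z₂) :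
    ∀ x : κ₂,
      ((T.filter (fun t => z₂ t = x)).map A).toFinset.card
        = ∑ y ∈ ((T.filter (fun t => z₂ t = x)).map z₁).toFinset,
            ((T.filter (fun t => z₁ t = y)).map A).toFinset.card := by
  intro x
  set I := ((T.filter (fun t => z₂ t = x)).map z₁).toFinset with hI
  -- every y in I satisfies p y = x
  have hpy : ∀ y ∈ I, p y = x := by
    intro y hy
    rw [hI, Multiset.mem_toFinset, Multiset.mem_map] at hy
    obtain ⟨s, hs, rfl⟩ := hy
    rw [Multiset.mem_filter] at hs
    have := hs.2
    rw [hcoarser] at this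
    exact this
  have hset : ((T.filter (fun t => z₂ t = x)).map A).toFinset
      = I.biUnion (fun y => ((T.filter (fun t => z₁ t = y)).map A).toFinset) := by
    ext b
    simp only [Finset.mem_biUnion, Multiset.mem_toFinset, Multiset.mem_map,
      Multiset.mem_filter]
    constructor
    · rintro ⟨t, ⟨htT, htx⟩, rfl⟩
      refine ⟨z₁ t, ?_, t, ⟨htT, rfl⟩, rfl⟩
      rw [hI, Multiset.mem_toFinset, Multiset.mem_map]
      exact ⟨t, Multiset.mem_filter.2 ⟨htT, htx⟩, rfl⟩
    · rintro ⟨y, hy, t, ⟨htT, hty⟩, rfl⟩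
      refine ⟨t, ⟨htT, ?_⟩, rfl⟩
      rw [hcoarser]
      simp only [Function.comp_apply, hty]
      exact hpy y hy
  rw [hset, Finset.card_biUnion]
  intro y₁ hy₁ y₂ hy₂ hne
  rw [Function.onFun, Finset.disjoint_left]
  intro b hb₁ hb₂
  rw [Multiset.mem_toFinset, Multiset.mem_map] at hb₁ hb₂
  obtain ⟨t₁, ht₁, hbt₁⟩ := hb₁
  obtain ⟨t₂, ht₂, hbt₂⟩ := hb₂
  rw [Multiset.mem_filter] at ht₁ ht₂
  have hz2 : z₂ t₁ = z₂ t₂ := by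
    rw [hcoarser]
    simp only [Function.comp_apply, ht₁.2, ht₂.2, hpy y₁ hy₁, hpy y₂ hy₂]
  have hKeq : K t₁ = K t₂ := by rw [hfiner]; simp [hz2]
  have := hK t₁ ht₁.1 t₂ ht₂.1 hKeq (hbt₁.trans hbt₂.symm)
  rw [ht₁.2, ht₂.2] at this
  exact hne this
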